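/- Let $n, r$ be positive integers and $h \le n$. Let $N_1 \in \mathbb{R}^{n\times n}$ be invertible, $K \in \mathbb{R}^{r\times n}$, $B_2 \in \mathbb{R}^{(n-h)\times r}$, let $Q \in \mathbb{R}^{n\times n}$ be symmetric positive semidefinite, let $R \in \mathbb{R}^{r\times r}$ be symmetric positive definite, and assume that the $r\times r$ matrix $I_r + KN_1\begin{pmatrix} 0_{h\times r} \\ -B_2 \end{pmatrix}$ has rank $r$ (i.e. is invertible). Define $X_1 = \begin{pmatrix} N_1 & 0 \\ KN_1 & I_r \end{pmatrix}$ (an $(n+r)\times(n+r)$ matrix) and $X_2 = \begin{pmatrix} I_h & 0 \\ 0 & -B_2 \\ 0 & I_r \end{pmatrix}$ (an $(n+r)\times(h+r)$ matrix with row blocks of sizes $h$, $n-h$, $r$ and column blocks of sizes $h$, $r$), and set $M = X_2^{\mathrm{T}} X_1^{\mathrm{T}} \,\mathrm{diag}(Q, R)\, X_1 X_2 = \begin{pmatrix} \hat{Q} & S^{\mathrm{T}} \\ S & \hat{R} \end{pmatrix}$, where $\hat{Q} \in \mathbb{R}^{h\times h}$, $S \in \mathbb{R}^{r\times h}$, $\hat{R}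 \in \mathbb{R}^{r\times r}$. Then: (i) $\hat{R} = \begin{pmatrix} 0 & -B_2^{\mathrm{T}} \end{pmatrix} N_1^{\mathrm{T}} Q N_1 \begin{pmatrix} 0 \\ -B_2 \end{pmatrix} + \left(I_r + KN_1\begin{pmatrix} 0 \\ -B_2 \end{pmatrix}\right)^{\mathrm{T}} R \left(I_r + KN_1\begin{pmatrix} 0 \\ -B_2 \end{pmatrix}\right)$; (ii) $\hat{R}$ is positive definite; and (iii) $\tilde{Q} := \hat{Q} - S^{\mathrm{T}}\hat{R}^{-1}S$ is positive semidefinite. -/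

import Mathlib

open Matrix

lemma isUnit_of_rank_eq {r : ℕ} (C : Matrix (Fin r) (Fin r) ℝ) (hC : C.rank = r) :
    IsUnit C := by
  rw [Matrix.rank] at hC
  have htop : LinearMap.range C.mulVecLin = ⊤ := by
    apply Submodule.eq_top_of_finrank_eq
    simp [hC]
  have hsurj : Function.Surjective C.mulVecLin := LinearMap.range_eq_top.mp htop
  have hinj : Function.Injective C.mulVecLin :=
    (LinearMap.injective_iff_surjective).mpr hsurj
  exact Matrix.mulVec_injective_iff_isUnit.mp hinj

lemma posDef_conj {r m : ℕ} {R : Matrix (Fin r) (Fin r) ℝ} (hR : R.PosDef)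
    (C : Matrix (Fin r) (Fin m) ℝ) (hC : Function.Injective C.mulVec) :
    (Cᵀ * R * C).PosDef := by
  rw [← conjTranspose_eq_transpose_of_trivial]
  refine posDef_iff_dotProduct_mulVec.mpr ⟨?_, ?_⟩
  · exact isHermitian_conjTranspose_mul_mul C hR.1
  · intro x hx
    have hCx : C *ᵥ x ≠ 0 := by
      intro hz
      exact hx (hC (by simpa using hz))
    have := hR.dotProduct_mulVec_pos hCx
    have key : star x ⬝ᵥ (Cᴴ * R * C) *ᵥ x = star (C *ᵥ x) ⬝ᵥ R *ᵥ (C *ᵥ x) := by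
      rw [star_mulVec, ← mulVec_mulVec, ← mulVec_mulVec, dotProduct_mulVec]
    rw [key]; exact this


/-- **Positive definiteness of `R̂` in the semidefinite case.**
With `N₁` invertible, `Q ≥ 0`, `R > 0`, `J = [[0], [-B₂]]` the `n × r` matrix whose
first `h` rows vanish, and `I_r + K N₁ J` of rank `r`, setting
`X₁ = [[N₁, 0], [K N₁, I_r]]`, `X₂ = [[I_h, 0], [0, -B₂], [0, I_r]]` and
`M = X₂ᵀ X₁ᵀ diag(Q, R) X₁ X₂ = [[Q̂, Sᵀ], [S, R̂]]`, one has
(i) `R̂ = Jᵀ N₁ᵀ Q N₁ J + (I_r + K N₁ J)ᵀ R (I_r + K N₁ J)`,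
(ii) `R̂ > 0`, and (iii) `Q̃ = Q̂ - Sᵀ R̂⁻¹ S ≥ 0`. -/
theorem transformed_cost_posSemidef (n r h : ℕ) (hh : 0 < h) (hr : 0 < r) (hn : h ≤ n)
    (N₁ : Matrix (Fin n) (Fin n) ℝ) (hN₁ : IsUnit N₁)
    (K : Matrix (Fin r) (Fin n) ℝ) (B₂ : Matrix (Fin (n - h)) (Fin r) ℝ)
    (Q : Matrix (Fin n) (Fin n) ℝ) (R : Matrix (Fin r) (Fin r) ℝ)
    (hQ : Q.PosSemidef) (hR : R.PosDef) :
    ∀ (e : Fin h ⊕ Fin (n - h) ≃ Fin n), e = finSumFinEquiv.trans (finCongr (by omega)) →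
    ∀ (J : Matrix (Fin n) (Fin r) ℝ),
      J = (fromRows (0 : Matrix (Fin h) (Fin r) ℝ) (-B₂)).submatrix e.symm id →
    (1 + K * N₁ * J).rank = r →
    ∀ (X₁ : Matrix (Fin n ⊕ Fin r) (Fin n ⊕ Fin r) ℝ),
      X₁ = fromBlocks N₁ 0 (K * N₁) 1 →
    ∀ (X₂ : Matrix (Fin n ⊕ Fin r) (Fin h ⊕ Fin r) ℝ),
      X₂ = fromBlocks
        ((fromRows (1 : Matrix (Fin h) (Fin h) ℝ)
          (0 : Matrix (Fin (n - h)) (Fin h) ℝ)).submatrix e.symm id)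
        J 0 1 →
    ∀ (M : Matrix (Fin h ⊕ Fin r) (Fin h ⊕ Fin r) ℝ),
      M = X₂ᵀ * X₁ᵀ * fromBlocks Q 0 0 R * X₁ * X₂ →
      M.toBlocks₂₂ =
          Jᵀ * N₁ᵀ * Q * N₁ * J + (1 + K * N₁ * J)ᵀ * R * (1 + K * N₁ * J) ∧
        (M.toBlocks₂₂).PosDef ∧
        (M.toBlocks₁₁ - M.toBlocks₁₂ * (M.toBlocks₂₂)⁻¹ * M.toBlocks₂₁).PosSemidef := by
  intro e he J hJ hrk X₁ hX₁ X₂ hX₂ M hM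
  set C : Matrix (Fin r) (Fin r) ℝ := 1 + K * N₁ * J with hC
  have hCunit : IsUnit C := isUnit_of_rank_eq C hrk
  -- block computation
  have h22 : M.toBlocks₂₂ = Jᵀ * N₁ᵀ * Q * N₁ * J + Cᵀ * R * C := by
    subst hM hX₁ hX₂
    simp only [fromBlocks_transpose, fromBlocks_multiply, toBlocks_fromBlocks₂₂,
      Matrix.mul_zero, Matrix.zero_mul, Matrix.mul_one, Matrix.one_mul, add_zero, zero_add,
      transpose_zero, transpose_one, transpose_add, transpose_mul, hC]
    simp only [Matrix.mul_add, Matrix.add_mul, Matrix.mul_assoc, Matrix.one_mul, Matrix.mul_one]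
    abel
  -- D is psd
  haveI := hR.isUnit.invertible
  have hD : (fromBlocks Q 0 0 R).PosSemidef := by
    have h0 : (0 : Matrix (Fin n) (Fin r) ℝ)ᴴ = 0 := by simp
    have := (PosDef.fromBlocks₂₂ Q (0 : Matrix (Fin n) (Fin r) ℝ) hR).mpr
      (by simpa using hQ)
    rwa [h0] at this
  -- M is psd
  have hMps : M.PosSemidef := by
    have := hD.conjTranspose_mul_mul_same (X₁ * X₂)
    rw [conjTranspose_mul, conjTranspose_eq_transpose_of_trivial,
      conjTranspose_eq_transpose_of_trivial] at this
    rw [hM]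
    simp only [Matrix.mul_assoc] at this ⊢
    exact this
  -- R̂ pos def
  have hRhat : (M.toBlocks₂₂).PosDef := by
    rw [h22]
    exact Matrix.PosDef.posSemidef_add
      (by
        have := hQ.conjTranspose_mul_mul_same (N₁ * J)
        rw [conjTranspose_mul, conjTranspose_eq_transpose_of_trivial,
          conjTranspose_eq_transpose_of_trivial] at this
        simpa only [Matrix.mul_assoc] using this)
      (posDef_conj hR C (Matrix.mulVec_injective_iff_isUnit.mpr hCunit))
  refine ⟨h22, hRhat, ?_⟩
  -- Schur complement
  haveI := hRhat.isUnit.invertible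
  have hsym : M.toBlocks₂₁ = (M.toBlocks₁₂)ᴴ := by
    have := hMps.1
    ext i j
    have := congrFun (congrFun this (Sum.inr i)) (Sum.inl j)
    simpa [toBlocks₂₁, toBlocks₁₂, conjTranspose_apply] using this.symm
  have hfb : (fromBlocks M.toBlocks₁₁ M.toBlocks₁₂ (M.toBlocks₁₂)ᴴ M.toBlocks₂₂).PosSemidef := by
    rw [← hsym, fromBlocks_toBlocks]
    exact hMps
  have := (PosDef.fromBlocks₂₂ M.toBlocks₁₁ M.toBlocks₁₂ hRhat).mp hfb
  rwa [← hsym] at this
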